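/- Unisolvency of the simplified 2D stress element: if τ = η + a₁ curl p₁ + a₂ curl p₂ + a₃ curl p₃ + a₄ curl p₄, with η a matrix field with rows in P_{1,0}×P_{0,1}, p₁ = −x(1−x)(1−y)e₁, p₂ = −y(1−y)(1−x)e₂, p₃ = x(1−x)y e₁, p₄ = xy(1−y)e₂ (curl taken row-wise), and all edge moments ∫_e τn·n ds and ∫_e (τn·t)p ds (p ∈ P₁(e)) on the unit square vanish, then τ = 0. -/
import Mathlib


lemma poly2 (c0 c1 c2 : ℝ) :
    (∫ t in (0:ℝ)..1, (c0 + c1 * t + c2 * t ^ 2)) = c0 + c1 / 2 + c2 / 3 := by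
  rw [intervalIntegral.integral_add (by apply Continuous.intervalIntegrable; continuity)
        (by apply Continuous.intervalIntegrable; continuity),
      intervalIntegral.integral_add (by apply Continuous.intervalIntegrable; continuity)
        (by apply Continuous.intervalIntegrable; continuity),
      intervalIntegral.integral_const, intervalIntegral.integral_const_mul,
      intervalIntegral.integral_const_mul, _root_.integral_id,
      _root_.integral_pow]
  norm_num; ring

lemma key (f : ℝ → ℝ) (c0 c1 c2 : ℝ) (hf : ∀ t, f t = c0 + c1 * t + c2 * t ^ 2)
    (h : (∫ t in (0:ℝ)..1, f t) = 0) : c0 + c1 / 2 + c2 / 3 = 0 := by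
  rw [show f = fun t => c0 + c1 * t + c2 * t ^ 2 from funext hf, poly2] at h
  exact h



/-- A general element of the simplified 2D stress space
`Σ_K = (P_{1,0} × P_{0,1} rows) ⊕ span{curl p₁, curl p₂, curl p₃, curl p₄}`,
where `p₁ = −x(1−x)(1−y)e₁`, `p₂ = −y(1−y)(1−x)e₂`, `p₃ = x(1−x)y e₁`,
`p₄ = xy(1−y)e₂` and curl is taken row-wise:
`curl p₁ = [[x(1−x), (1−2x)(1−y)],[0,0]]`, `curl p₂ = [[0,0],[(−1+2y)(1−x), −y(1−y)]]`,
`curl p₃ = [[x(1−x), −(1−2x)y],[0,0]]`, `curl p₄ = [[0,0],[x(1−2y), −y(1−y)]]`.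
Coefficients: `e11a e11b e12a e12b e21a e21b e22a e22b` for `η` and `a1 a2 a3 a4`. -/
def tau (e11a e11b e12a e12b e21a e21b e22a e22b a1 a2 a3 a4 : ℝ) (x y : ℝ) :
    Matrix (Fin 2) (Fin 2) ℝ :=
  !![e11a + e11b * x + a1 * (x * (1 - x)) + a3 * (x * (1 - x)),
     e12a + e12b * y + a1 * ((1 - 2 * x) * (1 - y)) - a3 * ((1 - 2 * x) * y);
     e21a + e21b * x + a2 * ((-1 + 2 * y) * (1 - x)) + a4 * (x * (1 - 2 * y)),
     e22a + e22b * y - a2 * (y * (1 - y)) - a4 * (y * (1 - y))]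

/-- Unisolvency of the simplified 2D stress element on the unit square: if all
edge moments `∫_e τn·n ds` and `∫_e (τn·t) p ds`, `p ∈ P₁(e)`, vanish then `τ = 0`.
Bottom edge `y=0`: `n=(0,−1)`, `t=(1,0)`, `τn = (−τ₁₂,−τ₂₂)`; right `x=1`: `n=(1,0)`,
`t=(0,1)`; top `y=1`: `n=(0,1)`, `t=(1,0)`; left `x=0`: `n=(−1,0)`, `t=(0,1)`. -/
theorem stmt_9 (e11a e11b e12a e12b e21a e21b e22a e22b a1 a2 a3 a4 : ℝ)
    (τ : ℝ → ℝ → Matrix (Fin 2) (Fin 2) ℝ)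
    (hτ : τ = tau e11a e11b e12a e12b e21a e21b e22a e22b a1 a2 a3 a4)
    -- normal-normal moments
    (hnb : (∫ t in (0:ℝ)..1, τ t 0 1 1) = 0)
    (hnr : (∫ t in (0:ℝ)..1, τ 1 t 0 0) = 0)
    (hnt : (∫ t in (0:ℝ)..1, τ t 1 1 1) = 0)
    (hnl : (∫ t in (0:ℝ)..1, τ 0 t 0 0) = 0)
    -- normal-tangential moments against P₁(e)
    (htb : ∀ a b : ℝ, (∫ t in (0:ℝ)..1, (a + b * t) * (-(τ t 0 0 1))) = 0)
    (htr : ∀ a b : ℝ, (∫ t in (0:ℝ)..1, (a + b * t) * (τ 1 t 1 0)) = 0)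
    (htt : ∀ a b : ℝ, (∫ t in (0:ℝ)..1, (a + b * t) * (τ t 1 0 1)) = 0)
    (htl : ∀ a b : ℝ, (∫ t in (0:ℝ)..1, (a + b * t) * (-(τ 0 t 1 0))) = 0) :
    ∀ x y : ℝ, τ x y = 0 := by
  subst hτ
  have E1 := key _ e22a 0 0 (fun t => by simp [tau]; try ring) hnb
  have E2 := key _ (e11a + e11b) 0 0 (fun t => by simp [tau]; try ring) hnr
  have E3 := key _ (e22a + e22b) 0 0 (fun t => by simp [tau]; try ring) hnt
  have E4 := key _ e11a 0 0 (fun t => by simp [tau]; try ring) hnl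
  have E5 := key _ (-e12a - a1) (2*a1) 0 (fun t => by simp [tau]; try ring) (htb 1 0)
  have E6 := key _ 0 (-e12a - a1) (2*a1) (fun t => by simp [tau]; try ring) (htb 0 1)
  have E7 := key _ (e21a + e21b + a4) (-2*a4) 0 (fun t => by simp [tau]; try ring) (htr 1 0)
  have E8 := key _ 0 (e21a + e21b + a4) (-2*a4) (fun t => by simp [tau]; try ring) (htr 0 1)
  have E9 := key _ (e12a + e12b - a3) (2*a3) 0 (fun t => by simp [tau]; try ring) (htt 1 0)
  have E10 := key _ 0 (e12a + e12b - a3) (2*a3) (fun t => by simp [tau]; try ring) (htt 0 1)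
  have E11 := key _ (-e21a + a2) (-2*a2) 0 (fun t => by simp [tau]; try ring) (htl 1 0)
  have E12 := key _ 0 (-e21a + a2) (-2*a2) (fun t => by simp [tau]; try ring) (htl 0 1)
  have h1 : e22a = 0 := by linarith
  have h2 : e22b = 0 := by linarith
  have h3 : e11a = 0 := by linarith
  have h4 : e11b = 0 := by linarith
  have h5 : a1 = 0 := by linarith
  have h6 : e12a = 0 := by linarith
  have h7 : a3 = 0 := by linarith
  have h8 : e12b = 0 := by linarith
  have h9 : a2 = 0 := by linarith
  have h10 : e21a = 0 := by linarith
  have h11 : a4 = 0 := by linarith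
  have h12 : e21b = 0 := by linarith
  intro x y
  ext i j
  fin_cases i <;> fin_cases j <;>
    simp [tau, h1, h2, h3, h4, h5, h6, h7, h8, h9, h10, h11, h12]
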